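/- Let Λ be a commutative ring, p a prime, f' ≥ 1 an integer, and λ, λ' ∈ Λ^× units. Let φ : Λ((u)) → Λ((u)) be the map on formal Laurent series over Λ given by φ(Σ_n α_n u^n) = Σ_n α_n u^{p·n}. Suppose μ_0, …, μ_{f'−1} are units of Λ((u)) satisfying μ_i = φ(μ_{i−1}) for 1 ≤ i ≤ f'−1 and λ·μ_0 = λ'·φ(μ_{f'−1}). Then each μ_i is a constant series given by a unit of Λ, and λ = λ'. (This is the computation underlying the paper's lemma that if the unramified twists M_{Λ,λ} and M_{Λ,λ'} of a rank one Breuil–Kisin module, or of a rank one étale φ-module, are isomorphic over Λ, then λ = λ'.) -/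

import Mathlib

noncomputable section

/-- Let `Λ` be a commutative ring, `p` a prime, `f' ≥ 1`, and
`λ, λ' ∈ Λˣ`.  Let `φ : Λ((u)) → Λ((u))` be the map `Σ αₙ uⁿ ↦ Σ αₙ u^{p·n}`.  If
`μ_0, …, μ_{f'−1}` are units of `Λ((u))` with `μ_i = φ(μ_{i−1})` for `1 ≤ i ≤ f'−1` and
`λ·μ_0 = λ'·φ(μ_{f'−1})`, then each `μ_i` is a constant series given by a unit of `Λ`, and
`λ = λ'`. -/
theorem statement_19
    (Λ : Type) [CommRing Λ] (p : ℕ) (hp : p.Prime) (f' : ℕ) (hf' : 1 ≤ f')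
    (lam lam' : Λˣ)
    (φL : LaurentSeries Λ →+ LaurentSeries Λ)
    (hφ1 : ∀ (x : LaurentSeries Λ) (k : ℤ), (φL x).coeff (p * k) = x.coeff k)
    (hφ2 : ∀ (x : LaurentSeries Λ) (n : ℤ), ¬(p : ℤ) ∣ n → (φL x).coeff n = 0)
    (μ : ℕ → LaurentSeries Λ)
    (hunit : ∀ i < f', IsUnit (μ i))
    (hrec : ∀ i : ℕ, 1 ≤ i → i ≤ f' - 1 → μ i = φL (μ (i - 1)))
    (hwrap : HahnSeries.C (lam : Λ) * μ 0 = HahnSeries.C (lam' : Λ) * φL (μ (f' - 1))) :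
    (∀ i < f', ∃ v : Λˣ, μ i = HahnSeries.C (v : Λ)) ∧ lam = lam' := by
  have hp2 : 2 ≤ p := hp.two_le
  have hpz : (p : ℤ) ≠ 0 := by positivity
  -- coefficient formulas for iterates of φL
  have iter1 : ∀ (k : ℕ) (x : LaurentSeries Λ) (m : ℤ),
      (φL^[k] x).coeff ((p : ℤ) ^ k * m) = x.coeff m := by
    intro k
    induction k with
    | zero => intro x m; simp
    | succ k ih =>
      intro x m
      rw [Function.iterate_succ_apply']
      have : ((p : ℤ) ^ (k + 1) * m) = (p : ℤ) * ((p : ℤ) ^ k * m) := by ring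
      rw [this]
      have := hφ1 (φL^[k] x) ((p : ℤ) ^ k * m)
      push_cast at this ⊢
      rw [this, ih]
  have iter2 : ∀ (k : ℕ) (x : LaurentSeries Λ) (n : ℤ),
      ¬((p : ℤ) ^ k ∣ n) → (φL^[k] x).coeff n = 0 := by
    intro k
    induction k with
    | zero => intro x n hn; exact absurd (one_dvd n) hn
    | succ k ih =>
      intro x n hn
      rw [Function.iterate_succ_apply']
      by_cases hd : (p : ℤ) ∣ n
      · obtain ⟨n', rfl⟩ := hd
        have := hφ1 (φL^[k] x) n'
        push_cast at this
        rw [this]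
        apply ih
        intro hdvd
        exact hn (by rw [pow_succ']; exact mul_dvd_mul_left _ hdvd)
      · exact hφ2 _ _ hd
  -- μ i = φL^[i] (μ 0) for i ≤ f' - 1
  have hiter : ∀ i ≤ f' - 1, μ i = φL^[i] (μ 0) := by
    intro i
    induction i with
    | zero => intro _; simp
    | succ i ih =>
      intro hle
      rw [hrec (i + 1) (by omega) hle, Nat.add_sub_cancel,
        ih (by omega), Function.iterate_succ_apply']
  have hmu : φL (μ (f' - 1)) = φL^[f'] (μ 0) := by
    rw [hiter (f' - 1) le_rfl, ← Function.iterate_succ_apply' φL (f' - 1) (μ 0)]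
    congr 1
    omega
  set ν := μ 0 with hν
  set q : ℤ := (p : ℤ) ^ f' with hq
  have hq2 : 2 ≤ q := by
    calc (2 : ℤ) ≤ (p : ℤ) := by exact_mod_cast hp2
    _ ≤ (p : ℤ) ^ f' := le_self_pow₀ (by omega) (by omega)
  -- coefficientwise form of hwrap
  have hco : ∀ n : ℤ, (lam : Λ) * ν.coeff n = (lam' : Λ) * (φL^[f'] ν).coeff n := by
    intro n
    have := congrArg (fun x => x.coeff n) hwrap
    simp only [HahnSeries.C_apply, HahnSeries.coeff_single_zero_mul, hmu] at this
    exact this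
  -- key step: if coeff nonzero then q ∣ and coeff at n/q nonzero
  have key : ∀ n : ℤ, ν.coeff n ≠ 0 → ∃ m : ℤ, n = q * m ∧ ν.coeff m ≠ 0 := by
    intro n hn
    by_cases hd : q ∣ n
    · obtain ⟨m, rfl⟩ := hd
      refine ⟨m, rfl, fun h0 => hn ?_⟩
      have := hco (q * m)
      rw [hq] at this
      rw [iter1 f' ν m, h0, mul_zero] at this
      have := (lam.mul_right_eq_zero).mp this
      exact this
    · exfalso
      have := hco n
      rw [iter2 f' ν n hd, mul_zero] at this
      exact hn ((lam.mul_right_eq_zero).mp this)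
  -- support is {0}
  have hsupp : ∀ n : ℤ, n ≠ 0 → ν.coeff n = 0 := by
    intro n hn0
    by_contra hn
    -- q^k ∣ n for all k
    have hdvd : ∀ k : ℕ, ∃ m : ℤ, n = q ^ k * m ∧ ν.coeff m ≠ 0 := by
      intro k
      induction k with
      | zero => exact ⟨n, by simp, hn⟩
      | succ k ih =>
        obtain ⟨m, hm, hm'⟩ := ih
        obtain ⟨m', hm'', hm'''⟩ := key m hm'
        exact ⟨m', by rw [hm, hm'']; ring, hm'''⟩
    obtain ⟨m, hm, _⟩ := hdvd n.natAbs
    have hqk : q ^ n.natAbs ∣ n := ⟨m, hm⟩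
    have h1 : q ^ n.natAbs ≤ |n| := Int.le_of_dvd (abs_pos.mpr hn0) ((dvd_abs _ _).mpr hqk)
    have h2 : (n.natAbs : ℤ) < 2 ^ n.natAbs := by
      exact_mod_cast (n.natAbs).lt_two_pow_self
    have h3 : (2 : ℤ) ^ n.natAbs ≤ q ^ n.natAbs := pow_le_pow_left₀ (by norm_num) hq2 _
    rw [Int.abs_eq_natAbs] at h1
    omega
  -- ν is constant
  set a : Λ := ν.coeff 0 with ha
  have hνC : ν = HahnSeries.C a := by
    ext n
    rw [HahnSeries.C_apply, HahnSeries.coeff_single]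
    split_ifs with h
    · rw [h]
    · exact hsupp n h
  -- a is a unit
  have haunit : IsUnit a := by
    obtain ⟨w, hw⟩ := (hunit 0 (by omega)).exists_right_inv
    have hw' : HahnSeries.C a * w = 1 := by rw [← hνC]; exact hw
    have := congrArg (fun x => x.coeff 0) hw'
    simp only [HahnSeries.C_apply, HahnSeries.coeff_single_zero_mul] at this
    exact IsUnit.of_mul_eq_one (w.coeff 0) (by simpa using this)
  obtain ⟨va, hva⟩ := haunit
  -- φL fixes constants
  have hφC : ∀ c : Λ, φL (HahnSeries.C c) = HahnSeries.C c := by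
    intro c
    ext n
    rw [HahnSeries.C_apply, HahnSeries.coeff_single]
    split_ifs with h
    · subst h
      have := hφ1 (HahnSeries.single (0:ℤ) c) 0
      simpa using this
    · by_cases hd : (p : ℤ) ∣ n
      · obtain ⟨m, rfl⟩ := hd
        have := hφ1 (HahnSeries.single (0:ℤ) c) m
        rw [this, HahnSeries.coeff_single]
        have hm : m ≠ 0 := fun h0 => h (by rw [h0, mul_zero])
        simp [hm]
      · exact hφ2 _ _ hd
  have hiterC : ∀ k : ℕ, φL^[k] (HahnSeries.C a) = HahnSeries.C a := by
    intro k
    induction k with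
    | zero => rfl
    | succ k ih => rw [Function.iterate_succ_apply', ih, hφC]
  constructor
  · intro i hi
    refine ⟨va, ?_⟩
    rw [hiter i (by omega), hνC, hiterC, hva]
  · have := hco 0
    rw [hνC, hiterC] at this
    simp only [HahnSeries.C_apply, HahnSeries.coeff_single_same] at this
    rw [← hva] at this
    have h2 : (lam : Λ) = (lam' : Λ) := by
      have h := congrArg (· * ((va⁻¹ : Λˣ) : Λ)) this
      simpa [mul_assoc] using h
    exact Units.ext h2
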